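/- Let f satisfy the concave hypotheses: continuous, C¹ in x, coercive (limsup_{|x|→∞} f(t,x)/|x| < 0 uniformly in t), and strictly concave in x uniformly in t. If the set B of globally bounded solutions of x' = f(t,x) is nonempty, then B is uniformly bounded and there exist two (possibly equal) bounded solutions r ≤ a such that B = {(s,x₀) : r(s) ≤ x₀ ≤ a(s)}; that is, x₀ is the value at time s of a bounded solution if and only if r(s) ≤ x₀ ≤ a(s). -/

import Mathlib

open Set Filter Topology intervalIntegral

section AuxiliaryLemmas
variable {f fx : ℝ → ℝ → ℝ}


/-- If the derivative is negative at `c`, values just to the right are smaller. -/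
lemma aux_eventually_lt {x : ℝ → ℝ} {c d : ℝ} (h : HasDerivAt x d c) (hd : d < 0) :
    ∀ᶠ t in 𝓝[>] c, x t < x c := by
  have hs : Tendsto (slope x c) (𝓝[≠] c) (𝓝 d) := hasDerivAt_iff_tendsto_slope.mp h
  have hev : ∀ᶠ t in 𝓝[≠] c, slope x c t < 0 := hs.eventually (eventually_lt_nhds hd)
  have hle : 𝓝[>] c ≤ 𝓝[≠] c := nhdsWithin_mono _ fun t ht => ne_of_gt ht
  filter_upwards [hle hev, self_mem_nhdsWithin] with t hst (htc : c < t)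
  have hslope : (x t - x c) / (t - c) < 0 := by
    have hne : t - c ≠ 0 := by intro h0; exact absurd (by linarith : t = c) (ne_of_gt htc)
    simpa [slope_def_field, div_eq_iff, sub_ne_zero] using hst
  have h2 : 0 < t - c := by linarith
  rcases div_neg_iff.mp hslope with ⟨ha, hb⟩ | ⟨ha, hb⟩ <;> linarith

/-- Blow-up lemma: a globally bounded solution of a coercive field never goes `≤ -ρ₀`. -/
lemma aux_blowup {g : ℝ → ℝ → ℝ} {δ ρ₀ : ℝ} (hδ : 0 < δ) (hρ : 0 < ρ₀)
    (hco : ∀ t x, ρ₀ ≤ |x| → g t x ≤ -δ * |x|)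
    {x : ℝ → ℝ} (hx : ∀ t, HasDerivAt x (g t (x t)) t)
    {M : ℝ} (hM : ∀ t, |x t| ≤ M) (t₀ : ℝ) : -ρ₀ < x t₀ := by
  by_contra hc
  push_neg at hc
  have hxc : Continuous x := continuous_iff_continuousAt.mpr fun t => (hx t).continuousAt
  -- Step 1: x stays ≤ -ρ₀ for all t ≥ t₀
  have step1 : ∀ t, t₀ ≤ t → x t ≤ -ρ₀ := by
    intro t₁ ht₁
    by_contra h1
    push_neg at h1
    set S : Set ℝ := Icc t₀ t₁ ∩ {t | x t ≤ -ρ₀} with hSdef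
    have hSc : IsClosed S := isClosed_Icc.inter (isClosed_Iic.preimage hxc)
    have hScomp : IsCompact S := isCompact_Icc.inter_right (isClosed_Iic.preimage hxc)
    have hSne : S.Nonempty := ⟨t₀, ⟨le_rfl, ht₁⟩, hc⟩
    set c := sSup S with hcdef
    have hcS : c ∈ S := hScomp.sSup_mem hSne
    have hct₁ : c < t₁ := by
      rcases lt_or_eq_of_le hcS.1.2 with h | h
      · exact h
      · exact absurd (h ▸ hcS.2) (not_le.mpr h1)
    have hxc2 : x c ≤ -ρ₀ := hcS.2
    have habs : ρ₀ ≤ |x c| := le_abs.mpr (Or.inr (by linarith))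
    have hderivneg : g c (x c) < 0 := by
      have := hco c (x c) habs
      nlinarith
    have hev := aux_eventually_lt (hx c) hderivneg
    have hIoc : Ioc c t₁ ∈ 𝓝[>] c := Ioc_mem_nhdsGT_of_mem ⟨le_rfl, hct₁⟩
    obtain ⟨t, hlt, htIoc⟩ := (hev.and (eventually_of_mem hIoc fun t ht => ht)).exists
    have htS : t ∈ S := ⟨⟨le_trans hcS.1.1 htIoc.1.le, htIoc.2⟩, show x t ≤ -ρ₀ by linarith⟩
    have : t ≤ c := le_csSup hScomp.bddAbove htS
    linarith [htIoc.1]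
  -- Step 2: x decreases at rate δ·ρ₀, contradicting boundedness
  have hM0 : 0 ≤ M := le_trans (abs_nonneg _) (hM t₀)
  set w : ℝ → ℝ := fun t => x t + δ * ρ₀ * t with hwdef
  have hw : ∀ t, HasDerivAt w (g t (x t) + δ * ρ₀) t := by
    intro t
    have h1 : HasDerivAt (fun u : ℝ => δ * ρ₀ * u) (δ * ρ₀) t := by
      simpa using (hasDerivAt_id t).const_mul (δ * ρ₀)
    exact (hx t).add h1
  have hwc : Continuous w := hxc.add (continuous_const.mul continuous_id)
  have hanti : AntitoneOn w (Ici t₀) := by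
    refine antitoneOn_of_deriv_nonpos (convex_Ici t₀) hwc.continuousOn
      (fun t _ => (hw t).differentiableAt.differentiableWithinAt) ?_
    · intro t ht
      rw [interior_Ici] at ht
      rw [(hw t).deriv]
      have hxt : x t ≤ -ρ₀ := step1 t (le_of_lt ht)
      have habs : ρ₀ ≤ |x t| := le_abs.mpr (Or.inr (by linarith))
      have h2 := hco t (x t) habs
      have h3 : |x t| = -x t := abs_of_neg (by linarith)
      nlinarith
  set T := t₀ + (M + ρ₀ + 1) / (δ * ρ₀) with hTdef
  have hδρ : 0 < δ * ρ₀ := mul_pos hδ hρ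
  have hT : t₀ ≤ T := by
    have : 0 < (M + ρ₀ + 1) / (δ * ρ₀) := div_pos (by linarith) hδρ
    rw [hTdef]; linarith
  have hwle : w T ≤ w t₀ := hanti self_mem_Ici hT hT
  have hxT : x T ≤ x t₀ - (M + ρ₀ + 1) := by
    have : δ * ρ₀ * T = δ * ρ₀ * t₀ + (M + ρ₀ + 1) := by
      rw [hTdef]; field_simp
    simp only [hwdef] at hwle
    linarith
  have := hM T
  have := abs_le.mp (hM T)
  linarith [hc]

/-- Any globally bounded solution is bounded by `ρ₀`. -/
lemma aux_bound {g : ℝ → ℝ → ℝ} {δ ρ₀ : ℝ} (hδ : 0 < δ) (hρ : 0 < ρ₀)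
    (hco : ∀ t x, ρ₀ ≤ |x| → g t x ≤ -δ * |x|)
    {x : ℝ → ℝ} (hx : ∀ t, HasDerivAt x (g t (x t)) t)
    {M : ℝ} (hM : ∀ t, |x t| ≤ M) (t : ℝ) : |x t| ≤ ρ₀ := by
  have hlow : -ρ₀ < x t := aux_blowup hδ hρ hco hx hM t
  -- reversed system
  set g' : ℝ → ℝ → ℝ := fun u z => g (-u) (-z) with hg'def
  set y : ℝ → ℝ := fun u => -x (-u) with hydef
  have hy : ∀ u, HasDerivAt y (g' u (y u)) u := by
    intro u
    have h1 : HasDerivAt (fun v : ℝ => x (-v)) (g (-u) (x (-u)) * (-1)) u :=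
      (hx (-u)).comp u (hasDerivAt_neg u)
    have h2 := h1.neg
    simp only [mul_neg_one, neg_neg] at h2
    have : g' u (y u) = g (-u) (x (-u)) := by simp [hg'def, hydef]
    rw [this]
    exact h2
  have hco' : ∀ u z, ρ₀ ≤ |z| → g' u z ≤ -δ * |z| := by
    intro u z hz
    have := hco (-u) (-z) (by rwa [abs_neg])
    simpa [hg'def, abs_neg] using this
  have hM' : ∀ u, |y u| ≤ M := fun u => by simp [hydef, abs_neg]; exact hM (-u)
  have := aux_blowup hδ hρ hco' hy hM' (-t)
  have hyval : y (-t) = -x t := by simp [hydef]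
  rw [hyval] at this
  rw [abs_le]
  constructor <;> linarith


/-- Construct a globally Lipschitz, bounded field agreeing with `f` on a window. -/
lemma aux_exists_lip {f fx : ℝ → ℝ → ℝ} (hcont : Continuous fun p : ℝ × ℝ => f p.1 p.2)
    (hderiv : ∀ t x, HasDerivAt (f t) (fx t x) x)
    (hfxcont : Continuous fun p : ℝ × ℝ => fx p.1 p.2)
    {ρ₀ : ℝ} (hρ : 0 < ρ₀) {A B : ℝ} (hAB : A ≤ B) :
    ∃ (v : ℝ → ℝ → ℝ) (K : NNReal) (C : ℝ), 0 ≤ C ∧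
      (∀ t, LipschitzWith K (v t)) ∧
      (∀ t ∈ Icc A B, ∀ z ∈ Icc (-ρ₀) ρ₀, v t z = f t z) ∧
      (∀ t z, |v t z| ≤ C) ∧
      Continuous (fun p : ℝ × ℝ => v p.1 p.2) := by
  have hρρ : -ρ₀ ≤ ρ₀ := by linarith
  set τ : ℝ → ℝ := fun t => min (max t A) B with hτdef
  set π : ℝ → ℝ := fun z => min (max z (-ρ₀)) ρ₀ with hπdef
  have hτc : Continuous τ := (continuous_id.max continuous_const).min continuous_const
  have hπc : Continuous π := (continuous_id.max continuous_const).min continuous_const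
  have hτmem : ∀ t, τ t ∈ Icc A B := fun t => ⟨le_min (le_max_right t A) hAB, min_le_right _ _⟩
  have hπmem : ∀ z, π z ∈ Icc (-ρ₀) ρ₀ :=
    fun z => ⟨le_min (le_max_right z (-ρ₀)) hρρ, min_le_right _ _⟩
  have hτeq : ∀ t ∈ Icc A B, τ t = t := by
    intro t ht; simp only [hτdef]; rw [max_eq_left ht.1, min_eq_left ht.2]
  have hπeq : ∀ z ∈ Icc (-ρ₀) ρ₀, π z = z := by
    intro z hz; simp only [hπdef]; rw [max_eq_left hz.1, min_eq_left hz.2]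
  have hπlip : ∀ z₁ z₂, |π z₁ - π z₂| ≤ |z₁ - z₂| := by
    intro z₁ z₂
    calc |π z₁ - π z₂| ≤ max |max z₁ (-ρ₀) - max z₂ (-ρ₀)| |ρ₀ - ρ₀| :=
          abs_min_sub_min_le_max _ _ _ _
      _ ≤ |z₁ - z₂| := max_le (abs_max_sub_max_le_abs _ _ _)
          (by simp [abs_nonneg])
  set Kset : Set (ℝ × ℝ) := Icc A B ×ˢ Icc (-ρ₀) ρ₀ with hKsetdef
  have hKc : IsCompact Kset := isCompact_Icc.prod isCompact_Icc
  obtain ⟨K₀, hK₀⟩ := hKc.exists_bound_of_continuousOn hfxcont.continuousOn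
  obtain ⟨C₀, hC₀⟩ := hKc.exists_bound_of_continuousOn hcont.continuousOn
  refine ⟨fun t z => f (τ t) (π z), ⟨max K₀ 0, le_max_right _ _⟩, max C₀ 0,
    le_max_right _ _, ?_, ?_, ?_, ?_⟩
  · intro t
    apply LipschitzWith.of_dist_le_mul
    intro z₁ z₂
    rw [Real.dist_eq, Real.dist_eq]
    have h1 : ‖f (τ t) (π z₁) - f (τ t) (π z₂)‖ ≤ max K₀ 0 * ‖π z₁ - π z₂‖ := by
      refine Convex.norm_image_sub_le_of_norm_hasDerivWithin_le
        (f := f (τ t)) (f' := fx (τ t)) (s := Icc (-ρ₀) ρ₀)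
        (fun z _ => (hderiv (τ t) z).hasDerivWithinAt) ?_ (convex_Icc _ _)
        (hπmem z₂) (hπmem z₁)
      intro z hz
      exact le_trans (hK₀ (τ t, z) ⟨hτmem t, hz⟩) (le_max_left _ _)
    rw [Real.norm_eq_abs, Real.norm_eq_abs] at h1
    calc |f (τ t) (π z₁) - f (τ t) (π z₂)| ≤ max K₀ 0 * |π z₁ - π z₂| := h1
      _ ≤ max K₀ 0 * |z₁ - z₂| :=
          mul_le_mul_of_nonneg_left (hπlip z₁ z₂) (le_max_right _ _)
  · intro t ht z hz
    show f (τ t) (π z) = f t z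
    rw [hτeq t ht, hπeq z hz]
  · intro t z
    exact le_trans (hC₀ (τ t, π z) ⟨hτmem t, hπmem z⟩) (le_max_left _ _)
  · exact hcont.comp ((hτc.comp continuous_fst).prodMk (hπc.comp continuous_snd))

/-- No-crossing of solutions of a globally-Lipschitz field on a window. -/
lemma aux_no_cross {v : ℝ → ℝ → ℝ} {K : NNReal} (hv : ∀ t, LipschitzWith K (v t))
    {A B : ℝ} {x y : ℝ → ℝ}
    (hx : ∀ t ∈ Icc A B, HasDerivAt x (v t (x t)) t)
    (hy : ∀ t ∈ Icc A B, HasDerivAt y (v t (y t)) t)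
    {s : ℝ} (hs : s ∈ Icc A B) (hxy : x s ≤ y s) :
    ∀ t ∈ Icc A B, x t ≤ y t := by
  intro t₁ ht₁
  by_contra hlt
  push_neg at hlt
  have hxC : ContinuousOn x (Icc A B) := fun u hu => ((hx u hu).continuousAt).continuousWithinAt
  have hyC : ContinuousOn y (Icc A B) := fun u hu => ((hy u hu).continuousAt).continuousWithinAt
  set h : ℝ → ℝ := fun u => y u - x u with hhdef
  rcases le_or_gt s t₁ with hst | hst
  · have hsub0 : Icc s t₁ ⊆ Icc A B := Icc_subset_Icc hs.1 ht₁.2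
    have hhc : ContinuousOn h (Icc s t₁) := (hyC.mono hsub0).sub (hxC.mono hsub0)
    have h0 : (0:ℝ) ∈ Icc (h t₁) (h s) := ⟨by simp only [hhdef]; linarith,
      by simp only [hhdef]; linarith⟩
    obtain ⟨c, hcmem, hceq⟩ := intermediate_value_Icc' hst hhc h0
    have hxyc : x c = y c := by simp only [hhdef] at hceq; linarith
    have hsub : Icc c t₁ ⊆ Icc A B := Icc_subset_Icc (le_trans hs.1 hcmem.1) ht₁.2
    have heq := ODE_solution_unique hv (hxC.mono hsub)
      (fun u hu => (hx u (hsub (Ico_subset_Icc_self hu))).hasDerivWithinAt)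
      (hyC.mono hsub)
      (fun u hu => (hy u (hsub (Ico_subset_Icc_self hu))).hasDerivWithinAt) hxyc
    have := heq (right_mem_Icc.mpr hcmem.2)
    linarith
  · have hsub0 : Icc t₁ s ⊆ Icc A B := Icc_subset_Icc ht₁.1 hs.2
    have hhc : ContinuousOn h (Icc t₁ s) := (hyC.mono hsub0).sub (hxC.mono hsub0)
    have h0 : (0:ℝ) ∈ Icc (h t₁) (h s) := ⟨by simp only [hhdef]; linarith,
      by simp only [hhdef]; linarith⟩
    obtain ⟨c, hcmem, hceq⟩ := intermediate_value_Icc hst.le hhc h0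
    have hxyc : x c = y c := by simp only [hhdef] at hceq; linarith
    have hsub : Icc t₁ c ⊆ Icc A B := Icc_subset_Icc ht₁.1 (le_trans hcmem.2 hs.2)
    have heq := ODE_solution_unique_of_mem_Icc_left
      (fun t _ => (hv t).lipschitzOnWith (s := univ)) (hxC.mono hsub)
      (fun u hu => (hx u (hsub (Ioc_subset_Icc_self hu))).hasDerivWithinAt)
      (fun _ _ => mem_univ _) (hyC.mono hsub)
      (fun u hu => (hy u (hsub (Ioc_subset_Icc_self hu))).hasDerivWithinAt)
      (fun _ _ => mem_univ _) hxyc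
    have := heq (left_mem_Icc.mpr hcmem.1)
    linarith

/-- Uniqueness of solutions of a globally-Lipschitz field on a window. -/
lemma aux_uniq {v : ℝ → ℝ → ℝ} {K : NNReal} (hv : ∀ t, LipschitzWith K (v t))
    {A B : ℝ} {x y : ℝ → ℝ}
    (hx : ∀ t ∈ Icc A B, HasDerivAt x (v t (x t)) t)
    (hy : ∀ t ∈ Icc A B, HasDerivAt y (v t (y t)) t)
    {s : ℝ} (hs : s ∈ Icc A B) (hxy : x s = y s) :
    ∀ t ∈ Icc A B, x t = y t := fun t ht =>
  le_antisymm (aux_no_cross hv hx hy hs hxy.le t ht)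
    (aux_no_cross hv hy hx hs hxy.ge t ht)

variable {f fx : ℝ → ℝ → ℝ}

/-- Comparison of globally bounded solutions: order at one time propagates. -/
lemma aux_comp (hcont : Continuous fun p : ℝ × ℝ => f p.1 p.2)
    (hderiv : ∀ t x, HasDerivAt (f t) (fx t x) x)
    (hfxcont : Continuous fun p : ℝ × ℝ => fx p.1 p.2)
    {ρ₀ : ℝ} (hρ : 0 < ρ₀) {x y : ℝ → ℝ}
    (hx : ∀ t, HasDerivAt x (f t (x t)) t) (hy : ∀ t, HasDerivAt y (f t (y t)) t)
    (hxb : ∀ t, |x t| ≤ ρ₀) (hyb : ∀ t, |y t| ≤ ρ₀)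
    {s : ℝ} (hxy : x s ≤ y s) (t : ℝ) : x t ≤ y t := by
  obtain ⟨v, K, C, hC, hlip, heqf, hbC, hvc⟩ :=
    aux_exists_lip hcont hderiv hfxcont hρ (min_le_max (a := s) (b := t))
  have hx' : ∀ u ∈ Icc (min s t) (max s t), HasDerivAt x (v u (x u)) u := by
    intro u hu
    rw [heqf u hu (x u) (abs_le.mp (hxb u))]
    exact hx u
  have hy' : ∀ u ∈ Icc (min s t) (max s t), HasDerivAt y (v u (y u)) u := by
    intro u hu
    rw [heqf u hu (y u) (abs_le.mp (hyb u))]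
    exact hy u
  exact aux_no_cross hlip hx' hy' ⟨min_le_left s t, le_max_left s t⟩ hxy t
    ⟨min_le_right s t, le_max_right s t⟩

/-- Monotone limits of uniformly bounded solutions are solutions. -/
lemma aux_mono_limit (hcont : Continuous fun p : ℝ × ℝ => f p.1 p.2)
    (hderiv : ∀ t x, HasDerivAt (f t) (fx t x) x)
    (hfxcont : Continuous fun p : ℝ × ℝ => fx p.1 p.2)
    {ρ₀ : ℝ} (hρ : 0 < ρ₀) {y : ℕ → ℝ → ℝ}
    (hsol : ∀ n t, HasDerivAt (y n) (f t (y n t)) t)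
    (hb : ∀ n t, |y n t| ≤ ρ₀) (hmono : ∀ n t, y n t ≤ y (n + 1) t) :
    ∃ φ : ℝ → ℝ, (∀ t, HasDerivAt φ (f t (φ t)) t) ∧ (∀ t, |φ t| ≤ ρ₀) ∧
      (∀ t, Tendsto (fun n => y n t) atTop (𝓝 (φ t))) := by
  have hmono' : ∀ t, Monotone fun n => y n t :=
    fun t => monotone_nat_of_le_succ fun n => hmono n t
  have hbdd : ∀ t, BddAbove (range fun n => y n t) := by
    intro t
    refine ⟨ρ₀, ?_⟩
    rintro _ ⟨n, rfl⟩
    exact (abs_le.mp (hb n t)).2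
  set φ : ℝ → ℝ := fun t => ⨆ n, y n t with hφdef
  have htend : ∀ t, Tendsto (fun n => y n t) atTop (𝓝 (φ t)) :=
    fun t => tendsto_atTop_ciSup (hmono' t) (hbdd t)
  have hφb : ∀ t, |φ t| ≤ ρ₀ := by
    intro t
    rw [abs_le]
    constructor
    · exact le_trans (abs_le.mp (hb 0 t)).1 (le_ciSup (hbdd t) 0)
    · exact le_of_tendsto (htend t) (Eventually.of_forall fun n => (abs_le.mp (hb n t)).2)
  have hyc : ∀ n, Continuous (y n) :=
    fun n => continuous_iff_continuousAt.mpr fun t => (hsol n t).continuousAt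
  -- φ is continuous (locally Lipschitz as a pointwise limit of equi-Lipschitz functions)
  have hφcont : Continuous φ := by
    rw [continuous_iff_continuousAt]
    intro t
    have hT : (-(|t| + 1) : ℝ) ≤ |t| + 1 := by linarith [abs_nonneg t]
    obtain ⟨v, K, C, hC, hlip, heqf, hbC, hvc⟩ :=
      aux_exists_lip hcont hderiv hfxcont hρ hT
    set T := |t| + 1
    have hlipy : ∀ n, ∀ u₁ ∈ Icc (-T) T, ∀ u₂ ∈ Icc (-T) T,
        |y n u₁ - y n u₂| ≤ C * |u₁ - u₂| := by
      intro n u₁ hu₁ u₂ hu₂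
      have := Convex.norm_image_sub_le_of_norm_hasDerivWithin_le
        (C := C) (f := y n) (f' := fun u => f u (y n u)) (s := Icc (-T) T)
        (fun u _ => (hsol n u).hasDerivWithinAt) ?_ (convex_Icc _ _) hu₂ hu₁
      · simpa [Real.norm_eq_abs] using this
      · intro u hu
        show ‖f u (y n u)‖ ≤ C
        rw [Real.norm_eq_abs, ← heqf u hu (y n u) (abs_le.mp (hb n u))]
        exact hbC u (y n u)
    have hφlip : ∀ u₁ ∈ Icc (-T) T, ∀ u₂ ∈ Icc (-T) T, |φ u₁ - φ u₂| ≤ C * |u₁ - u₂| := by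
      intro u₁ hu₁ u₂ hu₂
      have h2 : Tendsto (fun n => |y n u₁ - y n u₂|) atTop (𝓝 |φ u₁ - φ u₂|) :=
        ((htend u₁).sub (htend u₂)).abs
      exact le_of_tendsto h2 (Eventually.of_forall fun n => hlipy n u₁ hu₁ u₂ hu₂)
    have hmem : Icc (-T) T ∈ 𝓝 t :=
      Icc_mem_nhds (by simp only [T]; cases abs_cases t <;> linarith)
        (by simp only [T]; cases abs_cases t <;> linarith)
    have hlipOn : LipschitzOnWith (Real.toNNReal C) φ (Icc (-T) T) := by
      rw [lipschitzOnWith_iff_dist_le_mul]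
      intro u₁ hu₁ u₂ hu₂
      rw [Real.dist_eq, Real.dist_eq, Real.coe_toNNReal C hC]
      exact hφlip u₁ hu₁ u₂ hu₂
    exact hlipOn.continuousOn.continuousAt hmem
  -- φ satisfies the integral equation, hence the ODE
  refine ⟨φ, ?_, hφb, htend⟩
  intro t
  have hT : (-(|t| + 1) : ℝ) ≤ |t| + 1 := by linarith [abs_nonneg t]
  obtain ⟨v, K, C, hC, hlip, heqf, hbC, hvc⟩ := aux_exists_lip hcont hderiv hfxcont hρ hT
  set T := |t| + 1
  set F : ℝ → ℝ := fun τ => f τ (φ τ) with hFdef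
  have hFc : Continuous F := hcont.comp (continuous_id.prodMk hφcont)
  have hint : ∀ u ∈ Icc (-T) T, φ u = φ 0 + ∫ τ in (0:ℝ)..u, F τ := by
    intro u hu
    have h0mem : (0:ℝ) ∈ Icc (-T) T := by
      constructor <;> simp only [T] <;> linarith [abs_nonneg t]
    have hsubset : Set.uIoc (0:ℝ) u ⊆ Icc (-T) T := by
      intro τ hτ
      exact ⟨le_trans (le_min h0mem.1 hu.1) hτ.1.le, le_trans hτ.2 (max_le h0mem.2 hu.2)⟩
    have hIn : ∀ n, ∫ τ in (0:ℝ)..u, f τ (y n τ) = y n u - y n 0 := fun n =>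
      intervalIntegral.integral_eq_sub_of_hasDerivAt (fun τ _ => hsol n τ)
        ((hcont.comp (continuous_id.prodMk (hyc n))).intervalIntegrable 0 u)
    have hconv : Tendsto (fun n => ∫ τ in (0:ℝ)..u, f τ (y n τ)) atTop
        (𝓝 (∫ τ in (0:ℝ)..u, F τ)) := by
      apply intervalIntegral.tendsto_integral_filter_of_dominated_convergence
        (bound := fun _ => C)
      · exact Eventually.of_forall fun n =>
          ((hcont.comp (continuous_id.prodMk (hyc n))).aestronglyMeasurable).restrict
      · refine Eventually.of_forall fun n => MeasureTheory.ae_of_all _ fun τ hτ => ?_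
        rw [Real.norm_eq_abs, ← heqf τ (hsubset hτ) (y n τ) (abs_le.mp (hb n τ))]
        exact hbC τ (y n τ)
      · exact intervalIntegrable_const
      · refine MeasureTheory.ae_of_all _ fun τ hτ => ?_
        have hc2 : Continuous fun z => f τ z :=
          hcont.comp (continuous_const.prodMk continuous_id)
        exact hc2.continuousAt.tendsto.comp (htend τ)
    simp only [hIn] at hconv
    have h2 : Tendsto (fun n => y n u - y n 0) atTop (𝓝 (φ u - φ 0)) :=
      (htend u).sub (htend 0)
    have h3 := tendsto_nhds_unique hconv h2
    linarith [h3]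
  have hmem : Icc (-T) T ∈ 𝓝 t :=
    Icc_mem_nhds (by simp only [T]; cases abs_cases t <;> linarith)
      (by simp only [T]; cases abs_cases t <;> linarith)
  have hsm : StronglyMeasurableAtFilter F (𝓝 t) :=
    ⟨univ, univ_mem, hFc.aestronglyMeasurable.restrict⟩
  have hD : HasDerivAt (fun u => φ 0 + ∫ τ in (0:ℝ)..u, F τ) (F t) t :=
    (intervalIntegral.integral_hasDerivAt_right (hFc.intervalIntegrable 0 t) hsm
      hFc.continuousAt).const_add (φ 0)
  have hEq : φ =ᶠ[𝓝 t] fun u => φ 0 + ∫ τ in (0:ℝ)..u, F τ := by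
    filter_upwards [hmem] with u hu using hint u hu
  exact hD.congr_of_eventuallyEq hEq

variable {f fx : ℝ → ℝ → ℝ}

/-- Existence of a global solution through any point between two bounded solutions. -/
lemma aux_exists_between (hcont : Continuous fun p : ℝ × ℝ => f p.1 p.2)
    (hderiv : ∀ t x, HasDerivAt (f t) (fx t x) x)
    (hfxcont : Continuous fun p : ℝ × ℝ => fx p.1 p.2)
    {ρ₀ : ℝ} (hρ : 0 < ρ₀) {r a : ℝ → ℝ}
    (hr : ∀ t, HasDerivAt r (f t (r t)) t) (ha : ∀ t, HasDerivAt a (f t (a t)) t)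
    (hrb : ∀ t, |r t| ≤ ρ₀) (hab : ∀ t, |a t| ≤ ρ₀)
    {s x₀ : ℝ} (h1 : r s ≤ x₀) (h2 : x₀ ≤ a s) :
    ∃ x : ℝ → ℝ, (∀ t, HasDerivAt x (f t (x t)) t) ∧ (∀ t, |x t| ≤ ρ₀) ∧ x s = x₀ := by
  have hx₀b : x₀ ∈ Icc (-ρ₀) ρ₀ :=
    ⟨le_trans (abs_le.mp (hrb s)).1 h1, le_trans h2 (abs_le.mp (hab s)).2⟩
  -- Step 1: solutions on each finite window
  have key : ∀ n : ℕ, ∃ z : ℝ → ℝ, z s = x₀ ∧ ∀ t ∈ Icc (s - ((n:ℝ) + 1)) (s + ((n:ℝ) + 1)),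
      HasDerivAt z (f t (z t)) t ∧ r t ≤ z t ∧ z t ≤ a t := by
    intro n
    have hn0 : (0:ℝ) ≤ (n:ℝ) := Nat.cast_nonneg n
    set A : ℝ := s - ((n:ℝ) + 2) with hAdef
    set B : ℝ := s + ((n:ℝ) + 2) with hBdef
    obtain ⟨v, K, C, hC, hlip, heqf, hbC, hvc⟩ :=
      aux_exists_lip hcont hderiv hfxcont hρ (show A ≤ B by rw [hAdef, hBdef]; linarith)
    have hB' : B - s = (n:ℝ) + 2 := by rw [hBdef]; ring
    have hA' : s - A = (n:ℝ) + 2 := by rw [hAdef]; ring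
    have hpl : IsPicardLindelof v (tmin := A) (tmax := B)
        ⟨s, ⟨by rw [hAdef]; linarith, by rw [hBdef]; linarith⟩⟩ x₀
        ⟨C * ((n:ℝ) + 2), mul_nonneg hC (by linarith)⟩ 0 ⟨C, hC⟩ K :=
      { lipschitzOnWith := fun t _ => (hlip t).lipschitzOnWith
        continuousOn := fun z _ => (hvc.comp (continuous_id.prodMk continuous_const)).continuousOn
        norm_le := fun t _ z _ => by rw [Real.norm_eq_abs]; exact hbC t z
        mul_max_le := by
          show C * max (B - s) (s - A) ≤ C * ((n:ℝ) + 2) - 0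
          rw [hB', hA', max_self, sub_zero] }
    obtain ⟨z, hzs, hz⟩ := hpl.exists_eq_forall_mem_Icc_hasDerivWithinAt₀
    have hzs : z s = x₀ := hzs
    have hsubW : Icc (s - ((n:ℝ) + 1)) (s + ((n:ℝ) + 1)) ⊆ Icc A B :=
      Icc_subset_Icc (by rw [hAdef]; linarith) (by rw [hBdef]; linarith)
    have hW : ∀ t ∈ Icc (s - ((n:ℝ) + 1)) (s + ((n:ℝ) + 1)), HasDerivAt z (v t (z t)) t := by
      intro t ht
      have hIoo : t ∈ Ioo A B :=
        ⟨by rw [hAdef]; linarith [ht.1], by rw [hBdef]; linarith [ht.2]⟩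
      exact (hz t (Ioo_subset_Icc_self hIoo)).hasDerivAt (Icc_mem_nhds hIoo.1 hIoo.2)
    have hrv : ∀ t ∈ Icc (s - ((n:ℝ) + 1)) (s + ((n:ℝ) + 1)), HasDerivAt r (v t (r t)) t := by
      intro t ht
      rw [heqf t (hsubW ht) (r t) (abs_le.mp (hrb t))]
      exact hr t
    have hav : ∀ t ∈ Icc (s - ((n:ℝ) + 1)) (s + ((n:ℝ) + 1)), HasDerivAt a (v t (a t)) t := by
      intro t ht
      rw [heqf t (hsubW ht) (a t) (abs_le.mp (hab t))]
      exact ha t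
    have hsW : s ∈ Icc (s - ((n:ℝ) + 1)) (s + ((n:ℝ) + 1)) := ⟨by linarith, by linarith⟩
    have hra := aux_no_cross hlip hrv hW hsW (by rw [hzs]; exact h1)
    have haz := aux_no_cross hlip hW hav hsW (by rw [hzs]; exact h2)
    refine ⟨z, hzs, fun t ht => ⟨?_, hra t ht, haz t ht⟩⟩
    have hzb : z t ∈ Icc (-ρ₀) ρ₀ :=
      ⟨le_trans (abs_le.mp (hrb t)).1 (hra t ht), le_trans (haz t ht) (abs_le.mp (hab t)).2⟩
    have hD := hW t ht
    rwa [heqf t (hsubW ht) (z t) hzb] at hD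
  choose z hz1 hz2 using key
  -- Step 2: consistency of the windowed solutions
  have hbz : ∀ k : ℕ, ∀ u ∈ Icc (s - ((k:ℝ) + 1)) (s + ((k:ℝ) + 1)), z k u ∈ Icc (-ρ₀) ρ₀ := by
    intro k u hu
    obtain ⟨_, hh1, hh2⟩ := hz2 k u hu
    exact ⟨le_trans (abs_le.mp (hrb u)).1 hh1, le_trans hh2 (abs_le.mp (hab u)).2⟩
  have base : ∀ m n : ℕ, m ≤ n → ∀ t ∈ Icc (s - ((m:ℝ) + 1)) (s + ((m:ℝ) + 1)),
      z m t = z n t := by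
    intro m n hmn t ht
    have hm0 : (0:ℝ) ≤ (m:ℝ) := Nat.cast_nonneg m
    obtain ⟨v, K, C, hC, hlip, heqf, hbC, hvc⟩ :=
      aux_exists_lip hcont hderiv hfxcont hρ
        (show s - ((m:ℝ) + 1) ≤ s + ((m:ℝ) + 1) by linarith)
    have hcast : (m:ℝ) ≤ (n:ℝ) := Nat.cast_le.mpr hmn
    have hWmn : Icc (s - ((m:ℝ) + 1)) (s + ((m:ℝ) + 1)) ⊆
        Icc (s - ((n:ℝ) + 1)) (s + ((n:ℝ) + 1)) :=
      Icc_subset_Icc (by linarith) (by linarith)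
    have hm' : ∀ u ∈ Icc (s - ((m:ℝ) + 1)) (s + ((m:ℝ) + 1)),
        HasDerivAt (z m) (v u (z m u)) u := by
      intro u hu
      rw [heqf u hu _ (hbz m u hu)]
      exact (hz2 m u hu).1
    have hn' : ∀ u ∈ Icc (s - ((m:ℝ) + 1)) (s + ((m:ℝ) + 1)),
        HasDerivAt (z n) (v u (z n u)) u := by
      intro u hu
      rw [heqf u hu _ (hbz n u (hWmn hu))]
      exact (hz2 n u (hWmn hu)).1
    have hsm : s ∈ Icc (s - ((m:ℝ) + 1)) (s + ((m:ℝ) + 1)) := ⟨by linarith, by linarith⟩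
    exact aux_uniq hlip hm' hn' hsm (by rw [hz1 m, hz1 n]) t ht
  have hcons : ∀ m n : ℕ, ∀ t, t ∈ Icc (s - ((m:ℝ) + 1)) (s + ((m:ℝ) + 1)) →
      t ∈ Icc (s - ((n:ℝ) + 1)) (s + ((n:ℝ) + 1)) → z m t = z n t := by
    intro m n t htm htn
    rcases le_total m n with h | h
    · exact base m n h t htm
    · exact (base n m h t htn).symm
  -- Step 3: glue
  set x : ℝ → ℝ := fun t => z ⌈|t - s|⌉₊ t with hxdef
  have hmemW : ∀ (t : ℝ) (k : ℕ), |t - s| ≤ (k:ℝ) + 1 →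
      t ∈ Icc (s - ((k:ℝ) + 1)) (s + ((k:ℝ) + 1)) := by
    intro t k hk
    obtain ⟨hh1, hh2⟩ := abs_le.mp hk
    exact ⟨by linarith, by linarith⟩
  have hself : ∀ t : ℝ, t ∈ Icc (s - ((⌈|t - s|⌉₊:ℝ) + 1)) (s + ((⌈|t - s|⌉₊:ℝ) + 1)) :=
    fun t => hmemW t _ (le_trans (Nat.le_ceil _) (by linarith))
  have hxs : x s = x₀ := by
    show z ⌈|s - s|⌉₊ s = x₀
    rw [show (⌈|s - s|⌉₊ : ℕ) = 0 by simp]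
    exact hz1 0
  have hbx : ∀ t, |x t| ≤ ρ₀ := by
    intro t
    have := hbz _ t (hself t)
    exact abs_le.mpr this
  have hdx : ∀ t, HasDerivAt x (f t (x t)) t := by
    intro t
    set N : ℕ := ⌈|t - s|⌉₊ + 1 with hNdef
    have hNval : (N:ℝ) = (⌈|t - s|⌉₊ : ℝ) + 1 := by rw [hNdef]; push_cast; ring
    have hceil := Nat.le_ceil |t - s|
    have htU : t ∈ Ioo (s - ((N:ℝ) + 1)) (s + ((N:ℝ) + 1)) := by
      rw [hNval]
      obtain ⟨hh1, hh2⟩ := abs_le.mp hceil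
      exact ⟨by linarith, by linarith⟩
    have hUopen : Ioo (s - ((N:ℝ) + 1)) (s + ((N:ℝ) + 1)) ∈ 𝓝 t :=
      Ioo_mem_nhds htU.1 htU.2
    have hxeq : ∀ u ∈ Ioo (s - ((N:ℝ) + 1)) (s + ((N:ℝ) + 1)), x u = z N u := by
      intro u hu
      have h1 : |u - s| ≤ (N:ℝ) + 1 := abs_le.mpr ⟨by linarith [hu.1], by linarith [hu.2]⟩
      exact hcons ⌈|u - s|⌉₊ N u (hself u) (hmemW u N h1)
    have hEq : x =ᶠ[𝓝 t] z N := by filter_upwards [hUopen] with u hu using hxeq u hu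
    have htN : t ∈ Icc (s - ((N:ℝ) + 1)) (s + ((N:ℝ) + 1)) := Ioo_subset_Icc_self htU
    have hD := (hz2 N t htN).1
    have hxt : x t = z N t := hxeq t htU
    have hfinal := hD.congr_of_eventuallyEq hEq
    rwa [← hxt] at hfinal
  exact ⟨x, hdx, hbx, hxs⟩

variable {f fx : ℝ → ℝ → ℝ}

/-- Existence of the maximal bounded solution. -/
lemma aux_exists_max (hcont : Continuous fun p : ℝ × ℝ => f p.1 p.2)
    (hderiv : ∀ t x, HasDerivAt (f t) (fx t x) x)
    (hfxcont : Continuous fun p : ℝ × ℝ => fx p.1 p.2)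
    {δ ρ₀ : ℝ} (hδ : 0 < δ) (hρ : 0 < ρ₀)
    (hco : ∀ t x, ρ₀ ≤ |x| → f t x ≤ -δ * |x|)
    {w : ℝ → ℝ} (hw : ∀ t, HasDerivAt w (f t (w t)) t) (hwb : ∃ M, ∀ t, |w t| ≤ M) :
    ∃ a : ℝ → ℝ, (∀ t, HasDerivAt a (f t (a t)) t) ∧ (∀ t, |a t| ≤ ρ₀) ∧
      ∀ x : ℝ → ℝ, (∀ t, HasDerivAt x (f t (x t)) t) → (∃ M, ∀ t, |x t| ≤ M) →
        ∀ t, x t ≤ a t := by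
  have hbnd : ∀ x : ℝ → ℝ, (∀ t, HasDerivAt x (f t (x t)) t) →
      (∃ M, ∀ t, |x t| ≤ M) → ∀ t, |x t| ≤ ρ₀ := by
    rintro x hx ⟨M, hM⟩ t
    exact aux_bound hδ hρ hco hx hM t
  set A₀ : Set ℝ :=
    {c | ∃ x : ℝ → ℝ, (∀ t, HasDerivAt x (f t (x t)) t) ∧ (∀ t, |x t| ≤ ρ₀) ∧ x 0 = c}
    with hA₀def
  have hA₀ne : A₀.Nonempty := ⟨w 0, w, hw, hbnd w hw hwb, rfl⟩
  have hA₀bdd : BddAbove A₀ := by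
    refine ⟨ρ₀, ?_⟩
    rintro c ⟨x, _, hxb, rfl⟩
    exact (abs_le.mp (hxb 0)).2
  set α := sSup A₀ with hαdef
  have hsel : ∀ n : ℕ, ∃ x : ℝ → ℝ,
      ((∀ t, HasDerivAt x (f t (x t)) t) ∧ (∀ t, |x t| ≤ ρ₀)) ∧ α - 1/((n:ℝ)+1) < x 0 := by
    intro n
    have hpos : (0:ℝ) < 1/((n:ℝ)+1) := by positivity
    obtain ⟨c, hcA, hc⟩ := exists_lt_of_lt_csSup hA₀ne (show α - 1/((n:ℝ)+1) < α by linarith)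
    obtain ⟨x, hx1, hx2, rfl⟩ := hcA
    exact ⟨x, ⟨hx1, hx2⟩, hc⟩
  choose X hX1 hX2 using hsel
  set Y : ℕ → ℝ → ℝ :=
    fun n => Nat.rec (X 0) (fun n Yn => if X (n+1) 0 ≤ Yn 0 then Yn else X (n+1)) n with hYdef
  have hYsucc : ∀ n, Y (n+1) = if X (n+1) 0 ≤ Y n 0 then Y n else X (n+1) := fun n => rfl
  have hYmem : ∀ n, ∃ k, Y n = X k := by
    intro n
    induction n with
    | zero => exact ⟨0, rfl⟩
    | succ n ih =>
      obtain ⟨k, hk⟩ := ih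
      rw [hYsucc n]
      split
      · exact ⟨k, hk⟩
      · exact ⟨n+1, rfl⟩
  have hYsol : ∀ n, (∀ t, HasDerivAt (Y n) (f t (Y n t)) t) ∧ (∀ t, |Y n t| ≤ ρ₀) := by
    intro n
    obtain ⟨k, hk⟩ := hYmem n
    rw [hk]
    exact hX1 k
  have hYge : ∀ n, X n 0 ≤ Y n 0 := by
    intro n
    cases n with
    | zero => exact le_rfl
    | succ n =>
      rw [hYsucc n]
      split
      · assumption
      · exact le_rfl
  have hYle : ∀ n, Y n 0 ≤ α := by
    intro n
    obtain ⟨k, hk⟩ := hYmem n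
    rw [hk]
    exact le_csSup hA₀bdd ⟨X k, (hX1 k).1, (hX1 k).2, rfl⟩
  have hYmono : ∀ n t, Y n t ≤ Y (n+1) t := by
    intro n t
    rw [hYsucc n]
    split
    · exact le_rfl
    · rename_i h
      push_neg at h
      exact aux_comp hcont hderiv hfxcont hρ (hYsol n).1 (hX1 (n+1)).1
        (hYsol n).2 (hX1 (n+1)).2 h.le t
  obtain ⟨a, hasol, haab, htend⟩ := aux_mono_limit hcont hderiv hfxcont hρ
    (fun n => (hYsol n).1) (fun n => (hYsol n).2) hYmono
  have haval : α ≤ a 0 := by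
    have h0 : Tendsto (fun n : ℕ => 1/((n:ℝ)+1)) atTop (𝓝 0) :=
      tendsto_one_div_add_atTop_nhds_zero_nat
    have h1 : Tendsto (fun n : ℕ => α - 1/((n:ℝ)+1)) atTop (𝓝 α) := by
      simpa using tendsto_const_nhds.sub h0
    refine le_of_tendsto_of_tendsto h1 (htend 0) (Eventually.of_forall fun n => ?_)
    exact le_trans (hX2 n).le (hYge n)
  refine ⟨a, hasol, haab, ?_⟩
  intro x hx hxb t
  have hx0 : x 0 ∈ A₀ := ⟨x, hx, hbnd x hx hxb, rfl⟩
  have hle : x 0 ≤ a 0 := le_trans (le_csSup hA₀bdd hx0) haval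
  exact aux_comp hcont hderiv hfxcont hρ hx hasol (hbnd x hx hxb) haab hle t

end AuxiliaryLemmas

/-- under the concave hypotheses, the set of globally bounded solutions,
if nonempty, is uniformly bounded and is delimited by two bounded solutions `r ≤ a`. -/
theorem concave_bounded_solution_set_structure
    (f fx : ℝ → ℝ → ℝ)
    (hcont : Continuous fun p : ℝ × ℝ => f p.1 p.2)
    (hderiv : ∀ t x, HasDerivAt (f t) (fx t x) x)
    (hfxcont : Continuous fun p : ℝ × ℝ => fx p.1 p.2)
    (hcoer : ∃ δ > (0:ℝ), ∃ ρ₀ > (0:ℝ), ∀ t x : ℝ, ρ₀ ≤ |x| → f t x ≤ -δ * |x|)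
    (hconc : ∀ j : ℕ, ∃ δ > (0:ℝ), ∀ t : ℝ,
      ∀ x₁ ∈ Set.Icc (-(j:ℝ)) (j:ℝ), ∀ x₂ ∈ Set.Icc (-(j:ℝ)) (j:ℝ), x₁ ≠ x₂ →
        (fx t x₂ - fx t x₁) / (x₂ - x₁) < -δ)
    (B : Set (ℝ × ℝ))
    (hB : B = {p : ℝ × ℝ | ∃ x : ℝ → ℝ,
      (∀ t, HasDerivAt x (f t (x t)) t) ∧ (∃ M, ∀ t, |x t| ≤ M) ∧ x p.1 = p.2})
    (hne : B.Nonempty) :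
    (∃ M : ℝ, ∀ p ∈ B, |p.2| ≤ M) ∧
    ∃ r a : ℝ → ℝ,
      (∀ t, HasDerivAt r (f t (r t)) t) ∧
      (∀ t, HasDerivAt a (f t (a t)) t) ∧
      (∃ M, ∀ t, |r t| ≤ M ∧ |a t| ≤ M) ∧
      (∀ t, r t ≤ a t) ∧
      (∀ s x₀ : ℝ, (s, x₀) ∈ B ↔ r s ≤ x₀ ∧ x₀ ≤ a s) := by
  obtain ⟨δ, hδ, ρ₀, hρ, hco⟩ := hcoer
  have hbnd : ∀ x : ℝ → ℝ, (∀ t, HasDerivAt x (f t (x t)) t) →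
      (∃ M, ∀ t, |x t| ≤ M) → ∀ t, |x t| ≤ ρ₀ := by
    rintro x hx ⟨M, hM⟩ t
    exact aux_bound hδ hρ hco hx hM t
  obtain ⟨p, hp⟩ := hne
  rw [hB] at hp
  obtain ⟨w, hw1, hw2, hw3⟩ := hp
  -- maximal bounded solution
  obtain ⟨a, hasol, hab, hamax⟩ := aux_exists_max hcont hderiv hfxcont hδ hρ hco hw1 hw2
  -- time-reversed system for the minimal bounded solution
  set f' : ℝ → ℝ → ℝ := fun u z => f (-u) (-z) with hf'def
  set fx' : ℝ → ℝ → ℝ := fun u z => -fx (-u) (-z) with hfx'def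
  have hcont' : Continuous fun p : ℝ × ℝ => f' p.1 p.2 :=
    hcont.comp (continuous_fst.neg.prodMk continuous_snd.neg)
  have hderiv' : ∀ u z, HasDerivAt (f' u) (fx' u z) z := by
    intro u z
    have h := (hderiv (-u) (-z)).comp z (hasDerivAt_neg z)
    simpa [hf'def, hfx'def, mul_comm, Function.comp_def] using h
  have hfxcont' : Continuous fun p : ℝ × ℝ => fx' p.1 p.2 :=
    (hfxcont.comp (continuous_fst.neg.prodMk continuous_snd.neg)).neg
  have hco' : ∀ u z, ρ₀ ≤ |z| → f' u z ≤ -δ * |z| := by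
    intro u z hz
    have := hco (-u) (-z) (by rwa [abs_neg])
    simpa [hf'def, abs_neg] using this
  have hrevsol : ∀ x : ℝ → ℝ, (∀ t, HasDerivAt x (f t (x t)) t) →
      ∀ u, HasDerivAt (fun v => -x (-v)) (f' u (-x (-u))) u := by
    intro x hx u
    have h1 := (hx (-u)).comp u (hasDerivAt_neg u)
    have h2 := h1.neg
    simp only [mul_neg_one, neg_neg] at h2
    have : f' u (-x (-u)) = f (-u) (x (-u)) := by simp [hf'def]
    rw [this]
    exact h2
  have hrevsol' : ∀ x : ℝ → ℝ, (∀ u, HasDerivAt x (f' u (x u)) u) →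
      ∀ t, HasDerivAt (fun v => -x (-v)) (f t (-x (-t))) t := by
    intro x hx t
    have h1 := (hx (-t)).comp t (hasDerivAt_neg t)
    have h2 := h1.neg
    simp only [mul_neg_one, neg_neg] at h2
    have : f t (-x (-t)) = f' (-t) (x (-t)) := by simp [hf'def]
    rw [this]
    exact h2
  have hw2' : ∃ M, ∀ u, |(fun v => -w (-v)) u| ≤ M := by
    obtain ⟨M, hM⟩ := hw2
    exact ⟨M, fun u => by simpa [abs_neg] using hM (-u)⟩
  obtain ⟨r', hr'sol, hr'b, hr'max⟩ := aux_exists_max hcont' hderiv' hfxcont' hδ hρ hco'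
    (hrevsol w hw1) hw2'
  set r : ℝ → ℝ := fun t => -r' (-t) with hrdef
  have hrsol : ∀ t, HasDerivAt r (f t (r t)) t := hrevsol' r' hr'sol
  have hrb : ∀ t, |r t| ≤ ρ₀ := fun t => by
    simpa [hrdef, abs_neg] using hr'b (-t)
  have hrmin : ∀ x : ℝ → ℝ, (∀ t, HasDerivAt x (f t (x t)) t) →
      (∃ M, ∀ t, |x t| ≤ M) → ∀ t, r t ≤ x t := by
    intro x hx hxb t
    have hxb' : ∃ M, ∀ u, |(fun v => -x (-v)) u| ≤ M := by
      obtain ⟨M, hM⟩ := hxb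
      exact ⟨M, fun u => by simpa [abs_neg] using hM (-u)⟩
    have := hr'max (fun v => -x (-v)) (hrevsol x hx) hxb' (-t)
    simp only [neg_neg] at this
    simp only [hrdef, neg_neg]
    linarith
  have hra : ∀ t, r t ≤ a t := hamax r hrsol ⟨ρ₀, hrb⟩
  constructor
  · refine ⟨ρ₀, ?_⟩
    rintro q hq
    rw [hB] at hq
    obtain ⟨x, hx1, hx2, hx3⟩ := hq
    rw [← hx3]
    exact hbnd x hx1 hx2 q.1
  refine ⟨r, a, hrsol, hasol, ⟨ρ₀, fun t => ⟨hrb t, hab t⟩⟩, hra, ?_⟩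
  intro s x₀
  constructor
  · intro hp
    rw [hB] at hp
    obtain ⟨x, hx1, hx2, hx3⟩ := hp
    simp only at hx3
    exact ⟨hx3 ▸ hrmin x hx1 hx2 s, hx3 ▸ hamax x hx1 hx2 s⟩
  · rintro ⟨hh1, hh2⟩
    obtain ⟨x, hx1, hx2, hx3⟩ :=
      aux_exists_between hcont hderiv hfxcont hρ hrsol hasol hrb hab hh1 hh2
    rw [hB]
    exact ⟨x, hx1, ⟨ρ₀, hx2⟩, hx3⟩
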